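/- arXiv:2006.02890 — 2 statements merged into one kernel-verified Lean document; each statement's English description precedes it below -/
import Mathlib

section
/- Let Ψ ∈ ℝ^{m×n}, y ∈ ℝᵐ, s ≥ 1, x̃ ∈ ℝⁿ with ‖x̃‖₀ ≤ s, and R = y − Ψx̃. Suppose C > 0 is such that for every vector v ∈ ℝⁿ with ‖v‖₀ ≤ 2s, (1/m)‖Ψv‖₂² ≥ C‖v‖₂². If x̂ minimizes (1/(2m))‖y − Ψx‖₂² over {x : ‖x‖₀ ≤ s}, then ‖x̂ − x̃‖₂ ≤ (2√(2s)/C)·‖ΨᵀR/m‖_∞. -/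
theorem l0_least_squares_error_bound (m n s : ℕ) (hm : 0 < m) (hs : 1 ≤ s)
    (Ψ : Matrix (Fin m) (Fin n) ℝ) (y : Fin m → ℝ)
    (xtil : Fin n → ℝ)
    (hxtil : (Finset.univ.filter fun i => xtil i ≠ 0).card ≤ s)
    (C : ℝ) (hC : 0 < C)
    (hRE : ∀ v : Fin n → ℝ, (Finset.univ.filter fun i => v i ≠ 0).card ≤ 2 * s →
      C * ∑ i, (v i) ^ 2 ≤ (1 / (m : ℝ)) * ∑ i, (Ψ.mulVec v i) ^ 2)
    (xhat : Fin n → ℝ)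
    (hxhat : (Finset.univ.filter fun i => xhat i ≠ 0).card ≤ s)
    (hmin : ∀ x : Fin n → ℝ, (Finset.univ.filter fun i => x i ≠ 0).card ≤ s →
      (1 / (2 * (m : ℝ))) * ∑ i, (y i - Ψ.mulVec xhat i) ^ 2 ≤
        (1 / (2 * (m : ℝ))) * ∑ i, (y i - Ψ.mulVec x i) ^ 2) :
    Real.sqrt (∑ i, (xhat i - xtil i) ^ 2) ≤
      (2 * Real.sqrt (2 * s) / C) *
        (⨆ j, |Ψ.transpose.mulVec (y - Ψ.mulVec xtil) j / m|) := by
  have hmR : (0:ℝ) < m := by exact_mod_cast hm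
  set h : Fin n → ℝ := fun j => xhat j - xtil j with hh
  set R : Fin m → ℝ := fun i => y i - Ψ.mulVec xtil i with hR
  set M : ℝ := ⨆ j, |Ψ.transpose.mulVec (y - Ψ.mulVec xtil) j / m| with hMdef
  have hM0 : 0 ≤ M := Real.iSup_nonneg (fun j => abs_nonneg _)
  have hMj : ∀ j, |Ψ.transpose.mulVec R j / m| ≤ M := by
    intro j
    have : (y - Ψ.mulVec xtil) = R := rfl
    rw [hMdef, this]
    exact le_ciSup (f := fun j => |Ψ.transpose.mulVec R j / (m:ℝ)|)
      (Set.Finite.bddAbove (Set.finite_range _)) j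
  set E : ℝ := ∑ i, (h i)^2 with hE
  -- support bound
  have hcard : (Finset.univ.filter fun i => h i ≠ 0).card ≤ 2 * s := by
    have hsub : (Finset.univ.filter fun i => h i ≠ 0) ⊆
        (Finset.univ.filter fun i => xhat i ≠ 0) ∪ (Finset.univ.filter fun i => xtil i ≠ 0) := by
      intro j hj
      simp only [Finset.mem_filter, Finset.mem_union, Finset.mem_univ, true_and] at *
      by_contra hcon
      push_neg at hcon
      exact hj (by show xhat j - xtil j = 0; rw [hcon.1, hcon.2]; ring)
    calc (Finset.univ.filter fun i => h i ≠ 0).card ≤ _ := Finset.card_le_card hsub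
      _ ≤ _ + _ := Finset.card_union_le _ _
      _ ≤ 2 * s := by omega
  -- mulVec splitting
  have hsplit : ∀ i, y i - Ψ.mulVec xhat i = R i - Ψ.mulVec h i := by
    intro i
    have : Ψ.mulVec h i = Ψ.mulVec xhat i - Ψ.mulVec xtil i := by
      simp [Matrix.mulVec, dotProduct, hh, mul_sub, Finset.sum_sub_distrib]
    rw [this, hR]; ring
  -- basic inequality
  have hbasic : ∑ i, (Ψ.mulVec h i)^2 ≤ 2 * ∑ i, R i * Ψ.mulVec h i := by
    have h1 := hmin xtil hxtil
    have h2 : ∑ i, (y i - Ψ.mulVec xhat i)^2 ≤ ∑ i, (R i)^2 := by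
      have hpos : (0:ℝ) < 1 / (2 * (m:ℝ)) := by positivity
      exact le_of_mul_le_mul_left (by simpa [hR] using h1) hpos
    have h3 : ∑ i, (y i - Ψ.mulVec xhat i)^2
        = ∑ i, (R i)^2 - 2 * ∑ i, R i * Ψ.mulVec h i + ∑ i, (Ψ.mulVec h i)^2 := by
      rw [show ∑ i, (y i - Ψ.mulVec xhat i)^2
          = ∑ i, ((R i)^2 - 2*(R i * Ψ.mulVec h i) + (Ψ.mulVec h i)^2) from
        Finset.sum_congr rfl (fun i _ => by rw [hsplit i]; ring)]
      rw [Finset.sum_add_distrib, Finset.sum_sub_distrib, ← Finset.mul_sum]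
    linarith
  -- swap sums
  have hswap : ∑ i, R i * Ψ.mulVec h i = ∑ j, h j * Ψ.transpose.mulVec R j := by
    simp only [Matrix.mulVec, dotProduct, Matrix.transpose_apply,
      Finset.mul_sum]
    rw [Finset.sum_comm]
    exact Finset.sum_congr rfl (fun j _ => Finset.sum_congr rfl (fun i _ => by ring))
  -- bound inner product
  have hinner : ∑ j, h j * Ψ.transpose.mulVec R j ≤ (m : ℝ) * M * ∑ j, |h j| := by
    rw [Finset.mul_sum]
    apply Finset.sum_le_sum
    intro j _
    have h1 : h j * Ψ.transpose.mulVec R j ≤ |h j| * |Ψ.transpose.mulVec R j| := by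
      rw [← abs_mul]; exact le_abs_self _
    have h2 : |Ψ.transpose.mulVec R j| ≤ (m:ℝ) * M := by
      have := hMj j
      rw [abs_div, abs_of_pos hmR, div_le_iff₀ hmR] at this
      linarith [this]
    calc h j * Ψ.transpose.mulVec R j ≤ |h j| * |Ψ.transpose.mulVec R j| := h1
      _ ≤ |h j| * ((m:ℝ) * M) := by
          exact mul_le_mul_of_nonneg_left h2 (abs_nonneg _)
      _ = (m:ℝ) * M * |h j| := by ring
  -- l1-l2 bound
  have hl1 : ∑ j, |h j| ≤ Real.sqrt (2 * s) * Real.sqrt E := by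
    set T := Finset.univ.filter fun i => h i ≠ 0 with hT
    have e1 : ∑ j, |h j| = ∑ j ∈ T, |h j| :=
      (Finset.sum_filter_of_ne (fun j _ hj => by simpa using hj)).symm
    have e2 : (∑ j ∈ T, |h j|)^2 ≤ (T.card : ℝ) * ∑ j ∈ T, (h j)^2 := by
      calc (∑ j ∈ T, |h j|)^2 = (∑ j ∈ T, 1 * |h j|)^2 := by simp
        _ ≤ (∑ j ∈ T, (1:ℝ)^2) * ∑ j ∈ T, |h j|^2 := Finset.sum_mul_sq_le_sq_mul_sq T _ _
        _ = (T.card : ℝ) * ∑ j ∈ T, (h j)^2 := by simp [sq_abs]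
    have e3 : ∑ j ∈ T, (h j)^2 ≤ E := by
      rw [hE]; exact Finset.sum_le_sum_of_subset_of_nonneg (Finset.filter_subset _ _)
        (fun j _ _ => sq_nonneg _)
    have e4 : (∑ j ∈ T, |h j|)^2 ≤ (2 * s : ℝ) * E := by
      have hcard' : (T.card : ℝ) ≤ (2 * s : ℝ) := by exact_mod_cast hcard
      have hE0 : 0 ≤ E := Finset.sum_nonneg (fun j _ => sq_nonneg _)
      calc (∑ j ∈ T, |h j|)^2 ≤ (T.card : ℝ) * ∑ j ∈ T, (h j)^2 := e2
        _ ≤ (2 * s : ℝ) * E := by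
            apply mul_le_mul hcard' e3 (Finset.sum_nonneg (fun j _ => sq_nonneg _))
            positivity
    rw [e1]
    have habs : 0 ≤ ∑ j ∈ T, |h j| := Finset.sum_nonneg (fun j _ => abs_nonneg _)
    calc ∑ j ∈ T, |h j| = Real.sqrt ((∑ j ∈ T, |h j|)^2) := (Real.sqrt_sq habs).symm
      _ ≤ Real.sqrt ((2 * s : ℝ) * E) := Real.sqrt_le_sqrt e4
      _ = Real.sqrt (2 * s) * Real.sqrt E := Real.sqrt_mul (by positivity) _
  -- main chain
  have hchain : C * E ≤ 2 * M * (Real.sqrt (2 * s) * Real.sqrt E) := by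
    have h1 : C * E ≤ (1 / (m:ℝ)) * ∑ i, (Ψ.mulVec h i)^2 := hRE h hcard
    have h2 : (1 / (m:ℝ)) * ∑ i, (Ψ.mulVec h i)^2
        ≤ (1 / (m:ℝ)) * (2 * ((m:ℝ) * M * ∑ j, |h j|)) := by
      apply mul_le_mul_of_nonneg_left _ (by positivity)
      calc ∑ i, (Ψ.mulVec h i)^2 ≤ 2 * ∑ i, R i * Ψ.mulVec h i := hbasic
        _ = 2 * ∑ j, h j * Ψ.transpose.mulVec R j := by rw [hswap]
        _ ≤ 2 * ((m:ℝ) * M * ∑ j, |h j|) := by linarith [hinner]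
    have h3 : (1 / (m:ℝ)) * (2 * ((m:ℝ) * M * ∑ j, |h j|)) = 2 * M * ∑ j, |h j| := by
      field_simp
    have h4 : 2 * M * ∑ j, |h j| ≤ 2 * M * (Real.sqrt (2 * s) * Real.sqrt E) :=
      mul_le_mul_of_nonneg_left hl1 (by positivity)
    linarith
  -- conclude
  have hE0 : 0 ≤ E := Finset.sum_nonneg (fun j _ => sq_nonneg _)
  rcases eq_or_lt_of_le hE0 with heq | hlt
  · rw [← heq, Real.sqrt_zero]
    positivity
  · have hsE : 0 < Real.sqrt E := Real.sqrt_pos.mpr hlt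
    rw [div_mul_eq_mul_div, le_div_iff₀ hC]
    have hsq : Real.sqrt E * Real.sqrt E = E := Real.mul_self_sqrt hE0
    nlinarith [hsq, hsE, hchain]
end

section
/- Under the hypotheses of the previous lemma, if additionally ‖x − x̃‖_∞ ≥ 2‖ΨᵀR/m‖_∞ / C_*, then with r = ‖ΨᵀR/m‖_∞, the quantity t = ‖x − x̃‖_∞ satisfies (C_*/2)t² − r·t − (F(x) − F(x̃)) ≤ 0, and hence ‖x − x̃‖_∞ ≤ √(2·max(F(x) − F(x̃), 0)/C_*) + 2r/C_*. -/
set_option maxHeartbeats 1000000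

theorem linf_error_bound_from_gap (m n s : ℕ) (hm : 0 < m)
    (Ψ : Matrix (Fin m) (Fin n) ℝ) (y : Fin m → ℝ)
    (Cst : ℝ) (hCst : 0 < Cst)
    (hlow : ∀ v : Fin n → ℝ, (Finset.univ.filter fun i => v i ≠ 0).card ≤ 2 * s →
      Cst * ((∑ i, |v i|) * (⨆ i, |v i|)) ≤ (1 / (m : ℝ)) * ∑ i, (Ψ.mulVec v i) ^ 2)
    (xtil x : Fin n → ℝ)
    (hxtil : (Finset.univ.filter fun i => xtil i ≠ 0).card ≤ s)
    (hx : (Finset.univ.filter fun i => x i ≠ 0).card ≤ s)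
    (hbig : 2 * (⨆ j, |Ψ.transpose.mulVec (y - Ψ.mulVec xtil) j / m|) / Cst ≤
      (⨆ i, |x i - xtil i|)) :
    (Cst / 2 * (⨆ i, |x i - xtil i|) ^ 2 -
      (⨆ j, |Ψ.transpose.mulVec (y - Ψ.mulVec xtil) j / m|) * (⨆ i, |x i - xtil i|) -
      ((1 / (2 * (m : ℝ))) * ∑ i, (y i - Ψ.mulVec x i) ^ 2 -
        (1 / (2 * (m : ℝ))) * ∑ i, (y i - Ψ.mulVec xtil i) ^ 2) ≤ 0) ∧
    (⨆ i, |x i - xtil i|) ≤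
      Real.sqrt (2 * max ((1 / (2 * (m : ℝ))) * ∑ i, (y i - Ψ.mulVec x i) ^ 2 -
        (1 / (2 * (m : ℝ))) * ∑ i, (y i - Ψ.mulVec xtil i) ^ 2) 0 / Cst) +
      2 * (⨆ j, |Ψ.transpose.mulVec (y - Ψ.mulVec xtil) j / m|) / Cst := by
  have hmR : (0:ℝ) < (m:ℝ) := by exact_mod_cast hm
  set d : Fin n → ℝ := fun i => x i - xtil i with hd
  set R : Fin m → ℝ := y - Ψ.mulVec xtil with hR
  set a : Fin n → ℝ := Ψ.transpose.mulVec R with ha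
  set r : ℝ := ⨆ j, |a j / m| with hr
  set T : ℝ := ⨆ i, |x i - xtil i| with hT
  set S : ℝ := ∑ i, |x i - xtil i| with hS
  set G : ℝ := (1 / (2 * (m : ℝ))) * ∑ i, (y i - Ψ.mulVec x i) ^ 2 -
        (1 / (2 * (m : ℝ))) * ∑ i, (y i - Ψ.mulVec xtil i) ^ 2 with hG
  -- basic positivity facts
  have hTnn : 0 ≤ T := by
    cases isEmpty_or_nonempty (Fin n) with
    | inl h => rw [hT, Real.iSup_of_isEmpty]
    | inr h =>
      rw [hT]
      exact le_trans (abs_nonneg (x (Classical.arbitrary (Fin n)) - xtil (Classical.arbitrary (Fin n))))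
        (le_ciSup (f := fun i => |x i - xtil i|) (Set.Finite.bddAbove (Set.finite_range _)) (Classical.arbitrary (Fin n)))
  have hrnn : 0 ≤ r := by
    cases isEmpty_or_nonempty (Fin n) with
    | inl h => rw [hr, Real.iSup_of_isEmpty]
    | inr h =>
      rw [hr]
      exact le_trans (abs_nonneg (a (Classical.arbitrary (Fin n)) / m))
        (le_ciSup (f := fun j => |a j / (m:ℝ)|) (Set.Finite.bddAbove (Set.finite_range _)) (Classical.arbitrary (Fin n)))
  have hTS : T ≤ S := by
    cases isEmpty_or_nonempty (Fin n) with
    | inl h => rw [hT, hS, Real.iSup_of_isEmpty]; simp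
    | inr h =>
      rw [hT, hS]
      refine ciSup_le fun i => ?_
      exact Finset.single_le_sum (f := fun j => |x j - xtil j|) (fun j _ => abs_nonneg _) (Finset.mem_univ i)
  have haj : ∀ j, |a j| ≤ (m:ℝ) * r := by
    intro j
    have h1 : |a j / m| ≤ r := by
      rw [hr]; exact le_ciSup (f := fun j => |a j / (m:ℝ)|) (Set.Finite.bddAbove (Set.finite_range _)) j
    have h2 : |a j| / (m:ℝ) ≤ r := by rwa [abs_div, abs_of_pos hmR] at h1
    have h3 := (div_le_iff₀ hmR).mp h2
    linarith [h3]
  -- support bound for d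
  have hsupp : (Finset.univ.filter fun i => d i ≠ 0).card ≤ 2 * s := by
    have hsub : (Finset.univ.filter fun i => d i ≠ 0) ⊆
        (Finset.univ.filter fun i => x i ≠ 0) ∪ (Finset.univ.filter fun i => xtil i ≠ 0) := by
      intro i hi
      simp only [Finset.mem_filter, Finset.mem_univ, true_and, Finset.mem_union] at hi ⊢
      by_contra hc
      push_neg at hc
      exact hi (by simp [hd, hc.1, hc.2])
    calc (Finset.univ.filter fun i => d i ≠ 0).card
        ≤ ((Finset.univ.filter fun i => x i ≠ 0) ∪ (Finset.univ.filter fun i => xtil i ≠ 0)).card :=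
          Finset.card_le_card hsub
      _ ≤ _ := le_trans (Finset.card_union_le _ _) (by omega)
  -- pointwise mulVec decomposition
  have hmv : ∀ i, Ψ.mulVec x i = Ψ.mulVec xtil i + Ψ.mulVec d i := by
    intro i
    simp only [Matrix.mulVec, dotProduct, hd, mul_sub]
    rw [← Finset.sum_add_distrib]
    exact Finset.sum_congr rfl fun j _ => by ring
  -- energy identity
  have hGid : G = (1 / (2 * (m:ℝ))) * ∑ i, (Ψ.mulVec d i) ^ 2 -
      (1 / (m:ℝ)) * ∑ i, R i * Ψ.mulVec d i := by
    have : ∀ i, (y i - Ψ.mulVec x i) ^ 2 =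
        (y i - Ψ.mulVec xtil i) ^ 2 - 2 * (R i * Ψ.mulVec d i) + (Ψ.mulVec d i) ^ 2 := by
      intro i
      rw [hmv i]
      simp only [hR, Pi.sub_apply]
      ring
    rw [hG]
    rw [Finset.sum_congr rfl fun i _ => this i]
    rw [Finset.sum_add_distrib, Finset.sum_sub_distrib, ← Finset.mul_sum]
    field_simp
    ring
  -- dot product transpose identity
  have hdot : ∑ i, R i * Ψ.mulVec d i = ∑ j, a j * d j := by
    simp only [ha, Matrix.mulVec, dotProduct, Matrix.transpose_apply,
      Finset.mul_sum, Finset.sum_mul]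
    rw [Finset.sum_comm]
    exact Finset.sum_congr rfl fun j _ => Finset.sum_congr rfl fun i _ => by ring
  -- bound on the linear term
  have hlin : |∑ j, a j * d j| ≤ (m:ℝ) * r * S := by
    calc |∑ j, a j * d j| ≤ ∑ j, |a j * d j| := Finset.abs_sum_le_sum_abs _ _
      _ ≤ ∑ j, (m:ℝ) * r * |x j - xtil j| := by
          refine Finset.sum_le_sum fun j _ => ?_
          rw [abs_mul]
          exact mul_le_mul_of_nonneg_right (haj j) (abs_nonneg _)
      _ = (m:ℝ) * r * S := by rw [hS, Finset.mul_sum]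
  -- lower bound from hlow
  have hquad : Cst * (S * T) ≤ (1 / (m:ℝ)) * ∑ i, (Ψ.mulVec d i) ^ 2 := hlow d hsupp
  -- combine: G ≥ Cst/2 * S * T - r * S
  have hGlb : Cst / 2 * (S * T) - r * S ≤ G := by
    rw [hGid, hdot]
    have h1 : ∑ j, a j * d j ≤ (m:ℝ) * r * S := le_of_abs_le hlin
    have h2 : (1 / (m:ℝ)) * (∑ j, a j * d j) ≤ (1 / (m:ℝ)) * ((m:ℝ) * r * S) := by
      apply mul_le_mul_of_nonneg_left h1 (by positivity)
    have h3 : (1 / (m:ℝ)) * ((m:ℝ) * r * S) = r * S := by field_simp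
    rw [h3] at h2
    have he : (1 / (2*(m:ℝ))) * ∑ i, (Ψ.mulVec d i)^2
        = (1/2) * ((1 / (m:ℝ)) * ∑ i, (Ψ.mulVec d i)^2) := by ring
    rw [he]
    nlinarith [hquad, h2]
  -- r ≤ Cst * T / 2
  have hrT : 2 * r ≤ Cst * T := by
    calc 2 * r = (2 * r / Cst) * Cst := by field_simp
      _ ≤ T * Cst := mul_le_mul_of_nonneg_right hbig hCst.le
      _ = Cst * T := by ring
  -- first conclusion
  have key : Cst / 2 * T ^ 2 - r * T - G ≤ 0 := by
    nlinarith [mul_nonneg (sub_nonneg.2 hTS) (by linarith : (0:ℝ) ≤ Cst / 2 * T - r)]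
  refine ⟨key, ?_⟩
  -- second conclusion
  set M : ℝ := max G 0 with hM
  have hMnn : 0 ≤ M := le_max_right _ _
  have hGM : G ≤ M := le_max_left _ _
  set A : ℝ := Real.sqrt (2 * M / Cst) with hA
  have hAnn : 0 ≤ A := Real.sqrt_nonneg _
  have hAsq : A ^ 2 = 2 * M / Cst := Real.sq_sqrt (by positivity)
  have hCA : Cst * A ^ 2 = 2 * M := by rw [hAsq]; field_simp
  clear_value M A T S G r d R a
  by_contra hcon
  push_neg at hcon
  have h1 : Cst / 2 * T ^ 2 - r * T ≤ M := by linarith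
  have h2 : A + 2 * r / Cst < T := hcon
  have hrC : 0 ≤ 2 * r / Cst := by positivity
  have e1 : Cst / 2 * ((T - A) * (T + A)) = Cst / 2 * T ^ 2 - M := by
    linear_combination (-1/2 : ℝ) * hCA
  have e2 : Cst / 2 * ((T - A) * (T + A)) ≤ r * T := by linarith
  have e3 : 2 * r < Cst * (T - A) := by
    have h4 : 2 * r / Cst < T - A := by linarith
    calc 2 * r = 2 * r / Cst * Cst := by field_simp
      _ < (T - A) * Cst := by exact mul_lt_mul_of_pos_right h4 hCst
      _ = Cst * (T - A) := by ring
  have e4 : (0:ℝ) < T + A := by linarith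
  have e5 : 0 < (Cst * (T - A) - 2 * r) * (T + A) := mul_pos (by linarith) e4
  have e6 : 0 ≤ r * A := mul_nonneg hrnn hAnn
  nlinarith [e2, e5, e6]
end
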